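/- Let k : (0,∞) → ℝ be a differentiable positive function satisfying |k'(t)| ≤ c·k(t)/t for all t > 0 and k(s)/k(θ) ≤ C·(s/θ)^α for all 0 < θ ≤ s. Then for all θ > 0 and λ ≥ 0, |k(θ+λ) - k(θ)| ≤ c·C·k(θ)·((θ+λ)^α/θ^α − 1)/α. -/

import Mathlib

set_option maxHeartbeats 1000000

theorem stmt4 (c C α : ℝ) (hc : 0 < c) (hC : 0 < C) (hα : 0 < α)
    (k k' : ℝ → ℝ) (hkpos : ∀ t : ℝ, 0 < t → 0 < k t)
    (hderiv : ∀ t : ℝ, 0 < t → HasDerivAt k (k' t) t)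
    (hbound : ∀ t : ℝ, 0 < t → |k' t| ≤ c * k t / t)
    (hratio : ∀ θ s : ℝ, 0 < θ → θ ≤ s → k s / k θ ≤ C * (s / θ) ^ α)
    (θ lam : ℝ) (hθ : 0 < θ) (hlam : 0 ≤ lam) :
    |k (θ + lam) - k θ| ≤ c * C * k θ * ((θ + lam) ^ α / θ ^ α - 1) / α := by
  have hle : θ ≤ θ + lam := by linarith
  have hθα : (0:ℝ) < θ ^ α := Real.rpow_pos_of_pos hθ α
  have hkθ := hkpos θ hθ
  set g : ℝ → ℝ := fun t => c * C * k θ / θ ^ α * t ^ (α - 1) with hg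
  -- pointwise bound on Icc
  have hptw : ∀ t ∈ Set.Icc θ (θ + lam), |k' t| ≤ g t := by
    intro t ht
    have ht0 : 0 < t := lt_of_lt_of_le hθ ht.1
    have h2 : k t ≤ C * (t / θ) ^ α * k θ := by
      have h := hratio θ t hθ ht.1
      rw [div_le_iff₀ hkθ] at h
      linarith
    have h3 : c * k t / t ≤ c * (C * (t / θ) ^ α * k θ) / t := by
      gcongr
    refine (hbound t ht0).trans (h3.trans (le_of_eq ?_))
    have : (t / θ) ^ α = t ^ α / θ ^ α := Real.div_rpow ht0.le hθ.le α
    rw [this]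
    have ht1 : t ^ (α - 1) = t ^ α / t := by
      rw [Real.rpow_sub ht0, Real.rpow_one]
    simp only [hg, ht1]
    field_simp
  have hgnonneg : ∀ t ∈ Set.Icc θ (θ + lam), 0 ≤ g t := by
    intro t ht
    have ht0 : 0 < t := lt_of_lt_of_le hθ ht.1
    have := Real.rpow_pos_of_pos ht0 (α - 1)
    positivity
  -- g is continuous on Icc, hence integrable
  have hgcont : ContinuousOn g (Set.Icc θ (θ + lam)) := by
    apply ContinuousOn.mul continuousOn_const
    intro t ht
    exact (Real.continuousAt_rpow_const t (α - 1)
      (Or.inl (lt_of_lt_of_le hθ ht.1).ne')).continuousWithinAt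
  have hgint : MeasureTheory.IntegrableOn g (Set.Icc θ (θ + lam)) :=
    hgcont.integrableOn_Icc
  -- k' is measurable on Icc
  have hmeas : MeasureTheory.AEStronglyMeasurable k'
      (MeasureTheory.volume.restrict (Set.Icc θ (θ + lam))) := by
    have h1 : MeasureTheory.AEStronglyMeasurable (deriv k)
        (MeasureTheory.volume.restrict (Set.Icc θ (θ + lam))) :=
      (measurable_deriv k).aestronglyMeasurable
    apply h1.congr
    filter_upwards [MeasureTheory.ae_restrict_mem measurableSet_Icc] with t ht
    exact ((hderiv t (lt_of_lt_of_le hθ ht.1)).deriv)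
  have hk'int : MeasureTheory.IntegrableOn k' (Set.Icc θ (θ + lam)) := by
    refine hgint.mono' hmeas ?_
    filter_upwards [MeasureTheory.ae_restrict_mem measurableSet_Icc] with t ht
    simpa [Real.norm_eq_abs] using hptw t ht
  have hk'ii : IntervalIntegrable k' MeasureTheory.volume θ (θ + lam) := by
    rw [intervalIntegrable_iff_integrableOn_Icc_of_le hle]; exact hk'int
  have hgii : IntervalIntegrable g MeasureTheory.volume θ (θ + lam) := by
    rw [intervalIntegrable_iff_integrableOn_Icc_of_le hle]; exact hgint
  -- FTC
  have hftc : ∫ t in θ..(θ + lam), k' t = k (θ + lam) - k θ := by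
    apply intervalIntegral.integral_eq_sub_of_hasDerivAt
    · intro t ht
      rw [Set.uIcc_of_le hle] at ht
      exact hderiv t (lt_of_lt_of_le hθ ht.1)
    · exact hk'ii
  -- main bound
  have hmain : |k (θ + lam) - k θ| ≤ ∫ t in θ..(θ + lam), g t := by
    rw [← hftc, ← Real.norm_eq_abs]
    have habs : |∫ t in θ..(θ + lam), g t| = ∫ t in θ..(θ + lam), g t :=
      abs_of_nonneg (intervalIntegral.integral_nonneg hle hgnonneg)
    rw [← habs]
    apply intervalIntegral.norm_integral_le_abs_of_norm_le _ hgii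
    filter_upwards [MeasureTheory.ae_restrict_mem measurableSet_uIoc] with t ht
    rw [Set.uIoc_of_le hle] at ht
    simpa [Real.norm_eq_abs] using hptw t ⟨ht.1.le, ht.2⟩
  -- compute the integral
  have hcomp : ∫ t in θ..(θ + lam), g t
      = c * C * k θ / θ ^ α * (((θ + lam) ^ α - θ ^ α) / α) := by
    rw [hg]
    rw [intervalIntegral.integral_const_mul]
    rw [integral_rpow (Or.inl (by linarith : (-1:ℝ) < α - 1))]
    rw [sub_add_cancel]
  rw [hcomp] at hmain
  refine hmain.trans (le_of_eq ?_)
  field_simp
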